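/- arXiv:1501.07458 — 2 statements merged into one kernel-verified Lean document; each statement's English description precedes it below -/
import Mathlib

section
/- Let F and L be distributions on ℝ with \bar{F}(x) ~ \bar{L}(x) as x → ∞, and suppose F*F is long-tailed. Then \overline{L*L}(x) ~ \overline{F*F}(x) as x → ∞, and hence L*L is long-tailed. -/
open MeasureTheory Filter Set Asymptotics

/-- Tail function of a distribution: `F̄(x) = μ(x, ∞)`. -/
noncomputable def tail (μ : Measure ℝ) (x : ℝ) : ℝ := (μ (Set.Ioi x)).toReal

/-- `F(a, b] = F(b) - F(a)`. -/
noncomputable def intv (μ : Measure ℝ) (a b : ℝ) : ℝ := (μ (Set.Ioc a b)).toReal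

/-- A distribution is long-tailed if `F̄(x+1)/F̄(x) → 1` as `x → ∞`. -/
def LongTailed (μ : Measure ℝ) : Prop :=
  Tendsto (fun x => tail μ (x + 1) / tail μ x) atTop (nhds 1)

/-- Convolution of two distributions on ℝ (law of the sum of independent rvs). -/
noncomputable def mconv (μ ν : Measure ℝ) : Measure ℝ :=
  Measure.map (fun p : ℝ × ℝ => p.1 + p.2) (μ.prod ν)

/-- `n`-fold convolution of a distribution with itself; `nconv μ 0` is the unit mass at 0. -/
noncomputable def nconv (μ : Measure ℝ) : ℕ → Measure ℝ
  | 0 => Measure.dirac 0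
  | n + 1 => mconv (nconv μ n) μ

lemma mconv_prob (μ ν : Measure ℝ) [IsProbabilityMeasure μ] [IsProbabilityMeasure ν] :
    IsProbabilityMeasure (mconv μ ν) :=
  Measure.isProbabilityMeasure_map (measurable_fst.add measurable_snd).aemeasurable

lemma mconv_comm (μ ν : Measure ℝ) [SFinite μ] [SFinite ν] : mconv μ ν = mconv ν μ := by
  unfold mconv
  rw [← Measure.prod_swap, Measure.map_map measurable_add measurable_swap]
  have : ((fun p : ℝ × ℝ => p.1 + p.2) ∘ Prod.swap) = (fun p : ℝ × ℝ => p.1 + p.2) := by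
    funext p; simp [add_comm]
  rw [this]

lemma mconv_Ioi (μ ν : Measure ℝ) [SFinite ν] (x : ℝ) :
    (mconv μ ν) (Ioi x) = ∫⁻ y, ν (Ioi (x - y)) ∂μ := by
  unfold mconv
  rw [Measure.map_apply measurable_add measurableSet_Ioi,
    Measure.prod_apply (measurable_add measurableSet_Ioi)]
  congr 1
  funext y
  congr 1
  ext z
  simp [sub_lt_iff_lt_add, add_comm]

lemma tail_antitone (μ : Measure ℝ) [IsFiniteMeasure μ] : Antitone (tail μ) := fun x y h =>
  ENNReal.toReal_mono (measure_ne_top _ _) (measure_mono (Ioi_subset_Ioi h))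

lemma tail_nonneg (μ : Measure ℝ) (x : ℝ) : 0 ≤ tail μ x := ENNReal.toReal_nonneg

lemma tail_le_one (μ : Measure ℝ) [IsProbabilityMeasure μ] (x : ℝ) : tail μ x ≤ 1 := by
  have := measure_mono (subset_univ (Ioi x)) (μ := μ)
  simpa [tail] using ENNReal.toReal_mono (by simp) this

lemma exists_tail_ge (μ : Measure ℝ) [IsProbabilityMeasure μ] {c : ℝ} (hc : c < 1) :
    ∃ t : ℝ, c ≤ tail μ t := by
  rcases le_or_gt c 0 with h | h
  · exact ⟨0, le_trans h (tail_nonneg μ 0)⟩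
  · have hun : (⋃ n : ℕ, Ioi (-(n : ℝ))) = univ := by
      ext z; simp only [mem_iUnion, mem_Ioi, mem_univ, iff_true]
      obtain ⟨n, hn⟩ := exists_nat_gt (-z)
      exact ⟨n, by linarith⟩
    have hmono : Monotone fun n : ℕ => Ioi (-(n : ℝ)) := by
      intro a b hab
      exact Ioi_subset_Ioi (by exact_mod_cast neg_le_neg (by exact_mod_cast hab))
    have htend := tendsto_measure_iUnion_atTop (μ := μ) hmono
    rw [hun] at htend
    simp only [measure_univ] at htend
    have hlt : ENNReal.ofReal c < 1 := ENNReal.ofReal_lt_one.2 hc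
    have := htend.eventually (eventually_gt_nhds hlt)
    obtain ⟨n, hn⟩ := this.exists
    refine ⟨-(n : ℝ), ?_⟩
    have : ENNReal.ofReal c ≤ μ (Ioi (-(n : ℝ))) := le_of_lt hn
    exact ENNReal.ofReal_le_iff_le_toReal (measure_ne_top _ _) |>.1 this

lemma exists_tail_le (μ : Measure ℝ) [IsFiniteMeasure μ] {c : ℝ} (hc : 0 < c) :
    ∃ t : ℝ, tail μ t ≤ c := by
  have hint : (⋂ n : ℕ, Ioi ((n : ℝ))) = ∅ := by
    ext z; simp only [mem_iInter, mem_Ioi, mem_empty_iff_false, iff_false, not_forall, not_lt]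
    obtain ⟨n, hn⟩ := exists_nat_gt z
    exact ⟨n, le_of_lt hn⟩
  have hanti : Antitone fun n : ℕ => Ioi ((n : ℝ)) := fun a b hab =>
    Ioi_subset_Ioi (by exact_mod_cast hab)
  have htend := tendsto_measure_iInter_atTop (μ := μ)
    (fun n => (measurableSet_Ioi).nullMeasurableSet) hanti ⟨0, measure_ne_top _ _⟩
  rw [hint] at htend
  simp only [measure_empty] at htend
  have hlt : (0 : ENNReal) < ENNReal.ofReal c := ENNReal.ofReal_pos.2 hc
  obtain ⟨n, hn⟩ := (htend.eventually (eventually_lt_nhds hlt)).exists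
  exact ⟨(n : ℝ), ENNReal.toReal_le_of_le_ofReal (le_of_lt hc) (le_of_lt hn)⟩

lemma ratio_shift {g : ℝ → ℝ} (hmono : Antitone g) (hpos : ∀ x, 0 < g x)
    (h1 : Tendsto (fun x => g (x + 1) / g x) atTop (nhds 1)) (t : ℝ) :
    Tendsto (fun x => g (x + t) / g x) atTop (nhds 1) := by
  have hnat : ∀ n : ℕ, Tendsto (fun x => g (x + n) / g x) atTop (nhds 1) := by
    intro n
    induction n with
    | zero =>
      have hz : (fun x : ℝ => g (x + (0:ℕ)) / g x) = fun _ => (1:ℝ) := by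
        funext x
        rw [Nat.cast_zero, add_zero, div_self (ne_of_gt (hpos x))]
      rw [hz]; exact tendsto_const_nhds
    | succ n ih =>
      have hcomp : Tendsto (fun x => g ((x + n) + 1) / g (x + n)) atTop (nhds 1) :=
        h1.comp (tendsto_atTop_add_const_right atTop (n : ℝ) tendsto_id)
      have := hcomp.mul ih
      rw [mul_one] at this
      refine this.congr fun x => ?_
      have hne : g (x + n) ≠ 0 := ne_of_gt (hpos _)
      rw [div_mul_div_comm, mul_comm (g (x + n + 1)) (g (x + n)),
        mul_div_mul_left _ _ hne]
      congr 2
      push_cast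
      ring
  have hge : ∀ t : ℝ, 0 ≤ t → Tendsto (fun x => g (x + t) / g x) atTop (nhds 1) := by
    intro t ht
    obtain ⟨n, hn⟩ := exists_nat_ge t
    refine tendsto_of_tendsto_of_tendsto_of_le_of_le (hnat n) tendsto_const_nhds
      (fun x => ?_) (fun x => ?_)
    · exact (div_le_div_iff_of_pos_right (hpos x)).2 (hmono (by linarith))
    · exact (div_le_one (hpos x)).2 (hmono (by linarith))
  rcases le_or_gt 0 t with ht | ht
  · exact hge t ht
  · have hs : Tendsto (fun x => g (x + t + -t) / g (x + t)) atTop (nhds 1) :=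
      (hge (-t) (by linarith)).comp (tendsto_atTop_add_const_right atTop t tendsto_id)
    have hinv := hs.inv₀ one_ne_zero
    rw [inv_one] at hinv
    refine hinv.congr fun x => ?_
    rw [inv_div]
    congr 1
    ring

lemma key_bounds (F L : Measure ℝ) [IsProbabilityMeasure F] [IsProbabilityMeasure L]
    (hequiv : Tendsto (fun x => tail F x / tail L x) atTop (nhds 1))
    {ε : ℝ} (hε0 : 0 < ε) (hε1 : ε < 1) :
    ∃ a : ℝ, 0 ≤ a ∧ ∀ x : ℝ,
      (1 - ε)^2 * tail (mconv F F) (x + 2*a) ≤ tail (mconv L L) x ∧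
      tail (mconv L L) x ≤ (1 + ε)^2 * tail (mconv F F) (x - 2*a) := by
  haveI := mconv_prob F F
  haveI := mconv_prob L L
  -- positivity of tails
  obtain ⟨x₂, hx₂⟩ := eventually_atTop.1 (hequiv.eventually (eventually_gt_nhds (by norm_num : (1:ℝ)/2 < 1)))
  have hLpos : ∀ z, 0 < tail L z := by
    intro z
    have h2 : 0 < tail L (max z x₂) := by
      by_contra h
      have hz : tail L (max z x₂) = 0 :=
        le_antisymm (not_lt.1 h) (tail_nonneg _ _)
      have := hx₂ (max z x₂) (le_max_right _ _)
      rw [hz, div_zero] at this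
      linarith
    exact lt_of_lt_of_le h2 (tail_antitone L (le_max_left _ _))
  have hFpos : ∀ z, 0 < tail F z := by
    intro z
    have h2 : 0 < tail F (max z x₂) := by
      have hr := hx₂ (max z x₂) (le_max_right _ _)
      have hl := hLpos (max z x₂)
      have h3 : 1/2 * tail L (max z x₂) < tail F (max z x₂) := (lt_div_iff₀ hl).1 hr
      nlinarith
    exact lt_of_lt_of_le h2 (tail_antitone F (le_max_left _ _))
  -- ε/2-accuracy threshold
  have he1 : ∀ᶠ z in atTop, 1 - ε/2 < tail F z / tail L z :=
    hequiv.eventually (eventually_gt_nhds (by linarith))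
  have he2 : ∀ᶠ z in atTop, tail F z / tail L z < 1 + ε/2 :=
    hequiv.eventually (eventually_lt_nhds (by linarith))
  obtain ⟨x₀, hx₀⟩ := eventually_atTop.1 (he1.and he2)
  have hub : ∀ z, x₀ ≤ z → tail L z ≤ (1 + ε) * tail F z := by
    intro z hz
    obtain ⟨h1, h2⟩ := hx₀ z hz
    have hl := hLpos z
    have hf : (1 - ε/2) * tail L z < tail F z := (lt_div_iff₀ hl).1 h1
    nlinarith [mul_lt_mul_of_pos_left hf (show (0:ℝ) < 1 + ε by linarith),
      mul_nonneg (mul_nonneg hε0.le (show (0:ℝ) ≤ 1 - ε by linarith)) hl.le]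
  have hlb : ∀ z, x₀ ≤ z → (1 - ε) * tail F z ≤ tail L z := by
    intro z hz
    obtain ⟨h1, h2⟩ := hx₀ z hz
    have hl := hLpos z
    have hf : tail F z < (1 + ε/2) * tail L z := (div_lt_iff₀ hl).1 h2
    nlinarith [mul_lt_mul_of_pos_left hf (show (0:ℝ) < 1 - ε by linarith),
      mul_pos hε0 hl, mul_pos (mul_pos hε0 hε0) hl]
  -- choose the shift a
  obtain ⟨t₁, ht₁⟩ := exists_tail_ge F (show 1/(1+ε) < 1 by
    rw [div_lt_one (by linarith)]; linarith)
  obtain ⟨t₂, ht₂⟩ := exists_tail_le F (hLpos x₀)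
  obtain ⟨x₁, hx₁⟩ := exists_tail_ge L (show 1 - ε < 1 by linarith)
  set a : ℝ := max 0 (max (x₀ - t₁) (t₂ - x₁)) with ha
  have ha0 : 0 ≤ a := le_max_left _ _
  have hat₁ : x₀ - a ≤ t₁ := by
    have : x₀ - t₁ ≤ a := le_trans (le_max_left _ _) (le_max_right _ _)
    linarith
  have hat₂ : t₂ ≤ x₁ + a := by
    have : t₂ - x₁ ≤ a := le_trans (le_max_right _ _) (le_max_right _ _)
    linarith
  -- pointwise comparisons
  have hU : ∀ z, tail L z ≤ (1 + ε) * tail F (z - a) := by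
    intro z
    rcases le_or_gt x₀ z with hz | hz
    · exact le_trans (hub z hz)
        (mul_le_mul_of_nonneg_left (tail_antitone F (by linarith)) (by linarith))
    · have h1 : 1/(1+ε) ≤ tail F (z - a) :=
        le_trans ht₁ (tail_antitone F (by linarith))
      have h2 : (1:ℝ) ≤ (1 + ε) * tail F (z - a) := by
        rw [div_le_iff₀ (by linarith)] at h1
        linarith [h1]
      exact le_trans (tail_le_one L z) h2
  have hD : ∀ z, (1 - ε) * tail F (z + a) ≤ tail L z := by
    intro z
    rcases le_or_gt z x₁ with hz | hz
    · have : (1 - ε) * tail F (z + a) ≤ 1 - ε := by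
        nlinarith [tail_le_one F (z + a), tail_nonneg F (z + a)]
      exact le_trans this (le_trans hx₁ (tail_antitone L hz))
    · rcases le_or_gt x₀ z with hz' | hz'
      · exact le_trans
          (mul_le_mul_of_nonneg_left (tail_antitone F (by linarith)) (by linarith))
          (hlb z hz')
      · have h1 : tail F (z + a) ≤ tail L x₀ :=
          le_trans (tail_antitone F (by linarith)) ht₂
        have h2 : tail L x₀ ≤ tail L z := tail_antitone L (le_of_lt hz')
        nlinarith [tail_nonneg F (z + a)]
  -- ENNReal versions
  have hUE : ∀ z, L (Ioi z) ≤ ENNReal.ofReal (1 + ε) * F (Ioi (z - a)) := by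
    intro z
    calc L (Ioi z) = ENNReal.ofReal (tail L z) := by
          rw [tail, ENNReal.ofReal_toReal (measure_ne_top _ _)]
      _ ≤ ENNReal.ofReal ((1 + ε) * tail F (z - a)) := ENNReal.ofReal_le_ofReal (hU z)
      _ = ENNReal.ofReal (1 + ε) * F (Ioi (z - a)) := by
          rw [ENNReal.ofReal_mul (by linarith), tail,
            ENNReal.ofReal_toReal (measure_ne_top _ _)]
  have hDE : ∀ z, ENNReal.ofReal (1 - ε) * F (Ioi (z + a)) ≤ L (Ioi z) := by
    intro z
    calc ENNReal.ofReal (1 - ε) * F (Ioi (z + a))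
        = ENNReal.ofReal ((1 - ε) * tail F (z + a)) := by
          rw [ENNReal.ofReal_mul (by linarith), tail,
            ENNReal.ofReal_toReal (measure_ne_top _ _)]
      _ ≤ ENNReal.ofReal (tail L z) := ENNReal.ofReal_le_ofReal (hD z)
      _ = L (Ioi z) := by rw [tail, ENNReal.ofReal_toReal (measure_ne_top _ _)]
  refine ⟨a, ha0, fun x => ⟨?_, ?_⟩⟩
  -- lower bound
  · have chainD : ENNReal.ofReal (1 - ε) * (ENNReal.ofReal (1 - ε)
        * (mconv F F) (Ioi (x + 2*a))) ≤ (mconv L L) (Ioi x) := by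
      calc ENNReal.ofReal (1 - ε) * (ENNReal.ofReal (1 - ε) * (mconv F F) (Ioi (x + 2*a)))
          = ENNReal.ofReal (1 - ε) * ∫⁻ z, ENNReal.ofReal (1 - ε)
              * F (Ioi ((x + 2*a) - z)) ∂F := by
            rw [mconv_Ioi, lintegral_const_mul' _ _ ENNReal.ofReal_ne_top]
        _ ≤ ENNReal.ofReal (1 - ε) * ∫⁻ z, L (Ioi ((x + a) - z)) ∂F := by
            refine mul_le_mul_right (lintegral_mono fun z => ?_) _
            have := hDE ((x + a) - z)
            rwa [show (x + a) - z + a = (x + 2*a) - z by ring] at this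
        _ = ENNReal.ofReal (1 - ε) * (mconv F L) (Ioi (x + a)) := by rw [mconv_Ioi]
        _ = ENNReal.ofReal (1 - ε) * (mconv L F) (Ioi (x + a)) := by rw [mconv_comm]
        _ = ∫⁻ y, ENNReal.ofReal (1 - ε) * F (Ioi (((x + a) - y))) ∂L := by
            rw [mconv_Ioi, lintegral_const_mul' _ _ ENNReal.ofReal_ne_top]
        _ ≤ ∫⁻ y, L (Ioi (x - y)) ∂L := by
            refine lintegral_mono fun y => ?_
            have := hDE (x - y)
            rwa [show x - y + a = (x + a) - y by ring] at this
        _ = (mconv L L) (Ioi x) := (mconv_Ioi L L x).symm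
    have := ENNReal.toReal_mono (measure_ne_top _ _) chainD
    rw [ENNReal.toReal_mul, ENNReal.toReal_mul, ENNReal.toReal_ofReal (by linarith)] at this
    calc (1 - ε)^2 * tail (mconv F F) (x + 2*a)
        = (1 - ε) * ((1 - ε) * tail (mconv F F) (x + 2*a)) := by ring
      _ ≤ tail (mconv L L) x := this
  -- upper bound
  · have chainU : (mconv L L) (Ioi x) ≤ ENNReal.ofReal (1 + ε)
        * (ENNReal.ofReal (1 + ε) * (mconv F F) (Ioi (x - 2*a))) := by
      calc (mconv L L) (Ioi x) = ∫⁻ y, L (Ioi (x - y)) ∂L := mconv_Ioi L L x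
        _ ≤ ∫⁻ y, ENNReal.ofReal (1 + ε) * F (Ioi ((x - a) - y)) ∂L := by
            refine lintegral_mono fun y => ?_
            have := hUE (x - y)
            rwa [show x - y - a = (x - a) - y by ring] at this
        _ = ENNReal.ofReal (1 + ε) * (mconv L F) (Ioi (x - a)) := by
            rw [mconv_Ioi, lintegral_const_mul' _ _ ENNReal.ofReal_ne_top]
        _ = ENNReal.ofReal (1 + ε) * (mconv F L) (Ioi (x - a)) := by rw [mconv_comm]
        _ = ENNReal.ofReal (1 + ε) * ∫⁻ z, L (Ioi ((x - a) - z)) ∂F := by rw [mconv_Ioi]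
        _ ≤ ENNReal.ofReal (1 + ε) * ∫⁻ z, ENNReal.ofReal (1 + ε)
              * F (Ioi ((x - 2*a) - z)) ∂F := by
            refine mul_le_mul_right (lintegral_mono fun z => ?_) _
            have := hUE ((x - a) - z)
            rwa [show (x - a) - z - a = (x - 2*a) - z by ring] at this
        _ = ENNReal.ofReal (1 + ε) * (ENNReal.ofReal (1 + ε)
              * (mconv F F) (Ioi (x - 2*a))) := by
            rw [lintegral_const_mul' _ _ ENNReal.ofReal_ne_top, mconv_Ioi]
    have hne : ENNReal.ofReal (1 + ε) * (ENNReal.ofReal (1 + ε)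
        * (mconv F F) (Ioi (x - 2*a))) ≠ ⊤ :=
      ENNReal.mul_ne_top ENNReal.ofReal_ne_top
        (ENNReal.mul_ne_top ENNReal.ofReal_ne_top (measure_ne_top _ _))
    have := ENNReal.toReal_mono hne chainU
    rw [ENNReal.toReal_mul, ENNReal.toReal_mul, ENNReal.toReal_ofReal (by linarith)] at this
    calc tail (mconv L L) x ≤ (1 + ε) * ((1 + ε) * tail (mconv F F) (x - 2*a)) := this
      _ = (1 + ε)^2 * tail (mconv F F) (x - 2*a) := by ring

theorem stmt8' (F L : Measure ℝ) [IsProbabilityMeasure F] [IsProbabilityMeasure L]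
    (hequiv : Tendsto (fun x => tail F x / tail L x) atTop (nhds 1))
    (hL : Tendsto (fun x => tail (mconv F F) (x + 1) / tail (mconv F F) x) atTop (nhds 1)) :
    Tendsto (fun x => tail (mconv L L) x / tail (mconv F F) x) atTop (nhds 1) ∧
      Tendsto (fun x => tail (mconv L L) (x + 1) / tail (mconv L L) x) atTop (nhds 1) := by
  haveI := mconv_prob F F
  haveI := mconv_prob L L
  have hgmono : Antitone (tail (mconv F F)) := tail_antitone _
  have hgpos : ∀ x, 0 < tail (mconv F F) x := by
    obtain ⟨N, hN⟩ := eventually_atTop.1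
      (hL.eventually (eventually_gt_nhds (by norm_num : (1:ℝ)/2 < 1)))
    have key : ∀ y, N ≤ y → 0 < tail (mconv F F) (y + 1) := by
      intro y hy
      by_contra h
      have hz : tail (mconv F F) (y + 1) = 0 :=
        le_antisymm (not_lt.1 h) (tail_nonneg _ _)
      have := hN y hy
      rw [hz, zero_div] at this
      linarith
    intro x
    have h1 := key (max (x - 1) N) (le_max_right _ _)
    have h2 : x ≤ max (x - 1) N + 1 := by
      have := le_max_left (x - 1) N
      linarith
    exact lt_of_lt_of_le h1 (hgmono h2)
  have hshift : ∀ t : ℝ,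
      Tendsto (fun x => tail (mconv F F) (x + t) / tail (mconv F F) x) atTop (nhds 1) :=
    ratio_shift hgmono hgpos hL
  have main : Tendsto (fun x => tail (mconv L L) x / tail (mconv F F) x) atTop (nhds 1) := by
    rw [tendsto_order]
    constructor
    · intro c hc
      set c' : ℝ := max c 0 with hc'def
      have hc'lt : c' < 1 := max_lt hc one_pos
      have hc'0 : 0 ≤ c' := le_max_right _ _
      set ε : ℝ := (1 - c') / 3 with hedef
      have hε0 : 0 < ε := by simp only [hedef]; linarith
      have hε1 : ε < 1 := by simp only [hedef]; linarith
      obtain ⟨a, ha0, hbd⟩ := key_bounds F L hequiv hε0 hε1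
      have hev : ∀ᶠ x in atTop,
          1 - ε < tail (mconv F F) (x + 2*a) / tail (mconv F F) x :=
        (hshift (2*a)).eventually (eventually_gt_nhds (by linarith))
      filter_upwards [hev] with x hx
      have hb := (hbd x).1
      have hgx := hgpos x
      have h1 : (1 - ε)^2 * (tail (mconv F F) (x + 2*a) / tail (mconv F F) x)
          ≤ tail (mconv L L) x / tail (mconv F F) x := by
        rw [mul_div_assoc']
        exact (div_le_div_iff_of_pos_right hgx).2 hb
      have h2 : (1 - ε)^3 < (1 - ε)^2 * (tail (mconv F F) (x + 2*a) / tail (mconv F F) x) := by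
        have hp : (0:ℝ) < (1 - ε)^2 := pow_pos (by linarith) 2
        calc (1 - ε)^3 = (1 - ε)^2 * (1 - ε) := by ring
          _ < _ := mul_lt_mul_of_pos_left hx hp
      have h3 : c ≤ c' := le_max_left _ _
      have h4 : c' = 1 - 3*ε := by rw [hedef]; ring
      have h5 : c < (1 - ε)^3 := by
        nlinarith [mul_pos (mul_pos hε0 hε0) (show (0:ℝ) < 3 - ε by linarith)]
      linarith
    · intro c hc
      set ε : ℝ := min (1/2) ((c - 1) / 8) with hedef
      have hε0 : 0 < ε := lt_min (by norm_num) (by linarith)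
      have hε1 : ε < 1 := lt_of_le_of_lt (min_le_left _ _) (by norm_num)
      have he2 : ε ≤ (c - 1) / 8 := min_le_right _ _
      have he3 : ε ≤ 1/2 := min_le_left _ _
      obtain ⟨a, ha0, hbd⟩ := key_bounds F L hequiv hε0 hε1
      have hsh : Tendsto (fun x => tail (mconv F F) (x - 2*a) / tail (mconv F F) x)
          atTop (nhds 1) := by
        have := hshift (-(2*a))
        refine this.congr fun x => ?_
        rw [← sub_eq_add_neg]
      have hev : ∀ᶠ x in atTop,
          tail (mconv F F) (x - 2*a) / tail (mconv F F) x < 1 + ε :=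
        hsh.eventually (eventually_lt_nhds (by linarith))
      filter_upwards [hev] with x hx
      have hb := (hbd x).2
      have hgx := hgpos x
      have h1 : tail (mconv L L) x / tail (mconv F F) x
          ≤ (1 + ε)^2 * (tail (mconv F F) (x - 2*a) / tail (mconv F F) x) := by
        rw [mul_div_assoc']
        exact (div_le_div_iff_of_pos_right hgx).2 hb
      have h2 : (1 + ε)^2 * (tail (mconv F F) (x - 2*a) / tail (mconv F F) x)
          < (1 + ε)^3 := by
        have hp : (0:ℝ) < (1 + ε)^2 := by positivity
        calc (1 + ε)^2 * (tail (mconv F F) (x - 2*a) / tail (mconv F F) x)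
            < (1 + ε)^2 * (1 + ε) := mul_lt_mul_of_pos_left hx hp
          _ = (1 + ε)^3 := by ring
      have h5 : (1 + ε)^3 < c := by
        have e2 : ε*ε ≤ ε*(1/2) := mul_le_mul_of_nonneg_left he3 hε0.le
        have e3 : ε*(ε*ε) ≤ ε*(ε*(1/2)) := mul_le_mul_of_nonneg_left e2 hε0.le
        nlinarith [e2, e3]
      linarith
  refine ⟨main, ?_⟩
  have comp1 : Tendsto (fun x => tail (mconv L L) (x + 1) / tail (mconv F F) (x + 1))
      atTop (nhds 1) :=
    main.comp (tendsto_atTop_add_const_right atTop 1 tendsto_id)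
  have hinv : Tendsto (fun x => tail (mconv F F) x / tail (mconv L L) x) atTop (nhds 1) := by
    have := main.inv₀ one_ne_zero
    rw [inv_one] at this
    exact this.congr fun x => inv_div _ _
  have prod := (comp1.mul hL).mul hinv
  rw [mul_one, mul_one] at prod
  refine prod.congr fun x => ?_
  have hg1 : tail (mconv F F) (x + 1) ≠ 0 := ne_of_gt (hgpos _)
  have hg : tail (mconv F F) x ≠ 0 := ne_of_gt (hgpos _)
  rcases eq_or_ne (tail (mconv L L) x) 0 with hT | hT
  · simp [hT, div_zero]
  · field_simp

/-- If tail F is asymptotically equivalent to tail L and F*F is long-tailed, then the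
tail of L*L is asymptotically equivalent to that of F*F, and hence L*L is long-tailed. -/
theorem stmt8 (F L : Measure ℝ) [IsProbabilityMeasure F] [IsProbabilityMeasure L]
    (hequiv : Tendsto (fun x => tail F x / tail L x) atTop (nhds 1))
    (hL : LongTailed (mconv F F)) :
    Tendsto (fun x => tail (mconv L L) x / tail (mconv F F) x) atTop (nhds 1) ∧
      LongTailed (mconv L L) := stmt8' F L hequiv hL
end

section
/- Let X₁, X₂, ... be independent random variables with distributions F₁, F₂, ..., let Hₖ denote the distribution of X₁ + ⋯ + Xₖ, and let τ be an independent counting random variable with pₖ = P(τ = k), ∑_{k=0}^n pₖ = 1 and pₙ > 0 for some n ≥ 1. Let H_τ = ∑_{k=0}^n pₖ Hₖ be the distribution of the random sum X₁ + ⋯ + X_τ. Then H_τ is long-tailed if and only if Hₙ is long-tailed. -/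
open MeasureTheory Filter Set Asymptotics

lemma intv_nonneg (μ : Measure ℝ) (a b : ℝ) : 0 ≤ intv μ a b := ENNReal.toReal_nonneg

lemma tail_anti (μ : Measure ℝ) [IsFiniteMeasure μ] {x y : ℝ} (h : x ≤ y) :
    tail μ y ≤ tail μ x :=
  ENNReal.toReal_mono (measure_ne_top μ _) (measure_mono (Set.Ioi_subset_Ioi h))

lemma intv_eq (μ : Measure ℝ) [IsFiniteMeasure μ] {x y : ℝ} (h : x ≤ y) :
    intv μ x y = tail μ x - tail μ y := by
  have hs : Set.Ioc x y ∪ Set.Ioi y = Set.Ioi x := Set.Ioc_union_Ioi_eq_Ioi h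
  have hd : Disjoint (Set.Ioc x y) (Set.Ioi y) := by
    rw [Set.disjoint_left]
    rintro z ⟨_, hz⟩ hz'
    exact absurd hz' (not_lt.mpr hz)
  have hmu : μ (Set.Ioi x) = μ (Set.Ioc x y) + μ (Set.Ioi y) := by
    rw [← hs, measure_union hd measurableSet_Ioi]
  rw [tail, tail, intv, hmu, ENNReal.toReal_add (measure_ne_top _ _) (measure_ne_top _ _)]
  ring

lemma exists_Ioc_pos (μ : Measure ℝ) {x : ℝ} (h : μ (Set.Ioi x) ≠ 0) :
    ∃ u v : ℝ, u < v ∧ 0 < μ (Set.Ioc u v) := by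
  by_contra hc
  push_neg at hc
  apply h
  have hcover : Set.Ioi x ⊆ ⋃ n : ℕ, Set.Ioc x (x + (n + 1)) := by
    intro y hy
    simp only [Set.mem_iUnion, Set.mem_Ioc]
    refine ⟨⌈y - x⌉₊, hy, ?_⟩
    have := Nat.le_ceil (y - x)
    linarith
  refine measure_mono_null hcover (measure_iUnion_null fun n => ?_)
  have := hc x (x + (n + 1)) (lt_add_of_pos_right x (by positivity))
  exact le_antisymm this zero_le

instance mconv_prob_s10 (μ ν : Measure ℝ) [IsProbabilityMeasure μ] [IsProbabilityMeasure ν] :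
    IsProbabilityMeasure (mconv μ ν) :=
  Measure.isProbabilityMeasure_map (measurable_fst.add measurable_snd).aemeasurable

lemma prod_le_mconv (μ ν : Measure ℝ) [SFinite ν] {s t u : Set ℝ} (hu : MeasurableSet u)
    (h : ∀ a ∈ s, ∀ b ∈ t, a + b ∈ u) : μ s * ν t ≤ mconv μ ν u := by
  rw [mconv, Measure.map_apply (f := fun p : ℝ × ℝ => p.1 + p.2) (measurable_fst.add measurable_snd) hu, ← Measure.prod_prod]
  exact measure_mono fun p hp => h p.1 hp.1 p.2 hp.2

lemma tail_mconv (μ ν : Measure ℝ) [IsProbabilityMeasure μ] [IsProbabilityMeasure ν]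
    (s t : ℝ) : tail μ s * tail ν t ≤ tail (mconv μ ν) (s + t) := by
  have h := prod_le_mconv μ ν (s := Set.Ioi s) (t := Set.Ioi t) (u := Set.Ioi (s + t))
    measurableSet_Ioi (fun a ha b hb => Set.mem_Ioi.mpr (add_lt_add (Set.mem_Ioi.mp ha) (Set.mem_Ioi.mp hb)))
  rw [tail, tail, tail, ← ENNReal.toReal_mul]
  exact ENNReal.toReal_mono (measure_ne_top _ _) h

lemma intv_mconv (μ ν : Measure ℝ) [IsProbabilityMeasure μ] [IsProbabilityMeasure ν]
    (x y u v : ℝ) : intv μ x y * intv ν u v ≤ intv (mconv μ ν) (x + u) (y + v) := by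
  have h := prod_le_mconv μ ν (s := Set.Ioc x y) (t := Set.Ioc u v)
    (u := Set.Ioc (x + u) (y + v)) measurableSet_Ioc
    (fun a ha b hb => ⟨add_lt_add ha.1 hb.1, add_le_add ha.2 hb.2⟩)
  rw [intv, intv, intv, ← ENNReal.toReal_mul]
  exact ENNReal.toReal_mono (measure_ne_top _ _) h
lemma longTailed_pos {μ : Measure ℝ} [IsFiniteMeasure μ] (h : LongTailed μ) (x : ℝ) :
    0 < tail μ x := by
  by_contra hx
  push_neg at hx
  have hx0 : tail μ x = 0 := le_antisymm hx (tail_nonneg _ _)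
  have hzero : Tendsto (fun y => tail μ (y + 1) / tail μ y) atTop (nhds 0) := by
    refine Tendsto.congr' ?_ tendsto_const_nhds
    filter_upwards [eventually_ge_atTop x] with y hy
    have h0 : tail μ y = 0 := le_antisymm (hx0 ▸ tail_anti μ hy) (tail_nonneg _ _)
    simp [h0]
  exact one_ne_zero (tendsto_nhds_unique h hzero)

lemma longTailed_shift_nat {μ : Measure ℝ} [IsFiniteMeasure μ] (h : LongTailed μ) (m : ℕ) :
    Tendsto (fun x => tail μ (x + m) / tail μ x) atTop (nhds 1) := by
  have hpos := longTailed_pos h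
  induction m with
  | zero =>
    refine Tendsto.congr (fun x => ?_) tendsto_const_nhds
    rw [Nat.cast_zero, add_zero, div_self (hpos x).ne']
  | succ m ih =>
    have h1 : Tendsto (fun x => tail μ ((x + m) + 1) / tail μ (x + m)) atTop (nhds 1) :=
      h.comp (tendsto_atTop_add_const_right atTop (m : ℝ) tendsto_id)
    have h2 := h1.mul ih
    rw [one_mul] at h2
    refine Tendsto.congr (fun x => ?_) h2
    rw [div_mul_div_comm, mul_comm (tail μ (x + m)) (tail μ x), ← div_mul_div_comm,
      div_self (hpos (x + m)).ne', mul_one]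
    norm_num [add_assoc]

lemma longTailed_shift {μ : Measure ℝ} [IsFiniteMeasure μ] (h : LongTailed μ) (c : ℝ) :
    Tendsto (fun x => tail μ (x + c) / tail μ x) atTop (nhds 1) := by
  have hpos := longTailed_pos h
  obtain ⟨m, hm⟩ : ∃ m : ℕ, |c| ≤ m := ⟨⌈|c|⌉₊, Nat.le_ceil _⟩
  have hc1 : c ≤ m := le_trans (le_abs_self c) hm
  have hc2 : -(m : ℝ) ≤ c := by have := neg_abs_le c; linarith
  have hub := longTailed_shift_nat h m
  have hlb : Tendsto (fun x => tail μ (x - m) / tail μ x) atTop (nhds 1) := by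
    have h2 : Tendsto (fun x => tail μ x / tail μ (x - m)) atTop (nhds 1) := by
      have h3 := (longTailed_shift_nat h m).comp
        (tendsto_atTop_add_const_right atTop (-(m : ℝ)) tendsto_id)
      refine h3.congr fun x => ?_
      simp only [Function.comp, id]
      rw [sub_eq_add_neg, add_assoc, neg_add_cancel, add_zero]
    have h4 := h2.inv₀ one_ne_zero
    rw [inv_one] at h4
    refine h4.congr fun x => ?_
    rw [inv_div]
  refine tendsto_of_tendsto_of_tendsto_of_le_of_le hub hlb ?_ ?_
  · exact fun x => div_le_div_of_nonneg_right (tail_anti μ (by linarith)) (hpos x).le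
  · exact fun x => div_le_div_of_nonneg_right (tail_anti μ (by linarith)) (hpos x).le

lemma longTailed_diff {μ : Measure ℝ} [IsFiniteMeasure μ] (h : LongTailed μ) (a b : ℝ) :
    Tendsto (fun x => (tail μ (x + a) - tail μ (x + b)) / tail μ x) atTop (nhds 0) := by
  have h1 := (longTailed_shift h a).sub (longTailed_shift h b)
  rw [sub_self] at h1
  refine h1.congr fun x => ?_
  rw [sub_div]

lemma longTailed_of_ratio {μ : Measure ℝ} [IsFiniteMeasure μ] (hpos : ∀ x, 0 < tail μ x)
    (h : Tendsto (fun x => (tail μ x - tail μ (x + 1)) / tail μ x) atTop (nhds 0)) :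
    LongTailed μ := by
  have h1 := (tendsto_const_nhds : Tendsto (fun _ : ℝ => (1:ℝ)) atTop (nhds 1)).sub h
  rw [sub_zero] at h1
  refine h1.congr fun x => ?_
  rw [sub_div, div_self (hpos x).ne']
  ring
lemma Hprob (F : ℕ → Measure ℝ) [∀ i, IsProbabilityMeasure (F i)] (H : ℕ → Measure ℝ)
    (hH0 : H 0 = Measure.dirac 0) (hH : ∀ k, H (k + 1) = mconv (H k) (F (k + 1))) :
    ∀ k, IsProbabilityMeasure (H k) := by
  intro k
  induction k with
  | zero => rw [hH0]; infer_instance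
  | succ k ih => rw [hH k]; exact mconv_prob_s10 _ _

lemma tailA (F : ℕ → Measure ℝ) [∀ i, IsProbabilityMeasure (F i)] (H : ℕ → Measure ℝ)
    (hHp : ∀ k, IsProbabilityMeasure (H k))
    (hH : ∀ k, H (k + 1) = mconv (H k) (F (k + 1)))
    (hFpos : ∀ i, ∃ x, 0 < tail (F i) x) (k n : ℕ) (hk : k ≤ n) :
    ∃ t c : ℝ, 0 < c ∧ ∀ x, c * tail (H k) x ≤ tail (H n) (x + t) := by
  induction n, hk using Nat.le_induction with
  | base => exact ⟨0, 1, one_pos, fun x => by simp⟩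
  | succ m hm ih =>
    obtain ⟨t, c, hc, hle⟩ := ih
    obtain ⟨x₀, hx₀⟩ := hFpos (m + 1)
    refine ⟨t + x₀, c * tail (F (m + 1)) x₀, mul_pos hc hx₀, fun x => ?_⟩
    haveI := hHp m
    have h2 : tail (H m) (x + t) * tail (F (m + 1)) x₀ ≤ tail (H (m + 1)) ((x + t) + x₀) := by
      rw [hH m]; exact tail_mconv _ _ _ _
    calc c * tail (F (m + 1)) x₀ * tail (H k) x
        = (c * tail (H k) x) * tail (F (m + 1)) x₀ := by ring
      _ ≤ tail (H m) (x + t) * tail (F (m + 1)) x₀ :=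
          mul_le_mul_of_nonneg_right (hle x) (tail_nonneg _ _)
      _ ≤ tail (H (m + 1)) (x + (t + x₀)) := by rw [← add_assoc]; exact h2

lemma intvB (F : ℕ → Measure ℝ) [∀ i, IsProbabilityMeasure (F i)] (H : ℕ → Measure ℝ)
    (hHp : ∀ k, IsProbabilityMeasure (H k))
    (hH : ∀ k, H (k + 1) = mconv (H k) (F (k + 1)))
    (hFpos : ∀ i, ∃ x, 0 < tail (F i) x) (k n : ℕ) (hk : k ≤ n) :
    ∃ a b γ : ℝ, a ≤ b ∧ 0 < γ ∧ ∀ x y, γ * intv (H k) x y ≤ intv (H n) (x + a) (y + b) := by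
  induction n, hk using Nat.le_induction with
  | base => exact ⟨0, 0, 1, le_rfl, one_pos, fun x y => by simp⟩
  | succ m hm ih =>
    obtain ⟨a, b, γ, hab, hγ, hle⟩ := ih
    obtain ⟨x₀, hx₀⟩ := hFpos (m + 1)
    have hne : F (m + 1) (Set.Ioi x₀) ≠ 0 := by
      intro h0
      rw [tail, h0] at hx₀
      simp at hx₀
    obtain ⟨u, v, huv, hpos⟩ := exists_Ioc_pos (F (m + 1)) hne
    have hFiv : 0 < intv (F (m + 1)) u v :=
      ENNReal.toReal_pos hpos.ne' (measure_ne_top _ _)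
    refine ⟨a + u, b + v, γ * intv (F (m + 1)) u v, by linarith, mul_pos hγ hFiv,
      fun x y => ?_⟩
    haveI := hHp m
    have h2 : intv (H m) (x + a) (y + b) * intv (F (m + 1)) u v ≤
        intv (H (m + 1)) ((x + a) + u) ((y + b) + v) := by
      rw [hH m]; exact intv_mconv _ _ _ _ _ _
    calc γ * intv (F (m + 1)) u v * intv (H k) x y
        = (γ * intv (H k) x y) * intv (F (m + 1)) u v := by ring
      _ ≤ intv (H m) (x + a) (y + b) * intv (F (m + 1)) u v :=
          mul_le_mul_of_nonneg_right (hle x y) (intv_nonneg _ _ _)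
      _ ≤ intv (H (m + 1)) (x + (a + u)) (y + (b + v)) := by
          rw [← add_assoc, ← add_assoc]; exact h2

/-- Random sum with a bounded-support counting variable: the compound distribution
H_tau = sum_k p_k H_k is long-tailed iff H_n is long-tailed, where H_k is the law of
X_1 + ... + X_k for independent X_i with laws F_i. -/
theorem stmt10 (F : ℕ → Measure ℝ) [∀ i, IsProbabilityMeasure (F i)]
    (hFpos : ∀ i, ∃ x, 0 < tail (F i) x)
    (H : ℕ → Measure ℝ) (hH0 : H 0 = Measure.dirac 0)
    (hH : ∀ k, H (k + 1) = mconv (H k) (F (k + 1)))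
    (n : ℕ) (hn : 1 ≤ n) (p : ℕ → ℝ) (hp0 : ∀ k, 0 ≤ p k)
    (hsum : ∑ k ∈ Finset.range (n + 1), p k = 1) (hpn : 0 < p n) :
    LongTailed (∑ k ∈ Finset.range (n + 1), ENNReal.ofReal (p k) • H k) ↔
      LongTailed (H n) := by
  have hHp := Hprob F H hH0 hH
  haveI := hHp n
  set M : Measure ℝ := ∑ k ∈ Finset.range (n + 1), ENNReal.ofReal (p k) • H k with hMdef
  have hMap : ∀ A : Set ℝ,
      (M A).toReal = ∑ k ∈ Finset.range (n + 1), p k * (H k A).toReal := by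
    intro A
    rw [hMdef, Measure.finset_sum_apply, ENNReal.toReal_sum]
    · refine Finset.sum_congr rfl fun k _ => ?_
      rw [Measure.smul_apply, smul_eq_mul, ENNReal.toReal_mul, ENNReal.toReal_ofReal (hp0 k)]
    · intro k _
      rw [Measure.smul_apply, smul_eq_mul]
      exact ENNReal.mul_ne_top ENNReal.ofReal_ne_top (measure_ne_top _ _)
  haveI : IsFiniteMeasure M := by
    constructor
    rw [hMdef, Measure.finset_sum_apply]
    refine ENNReal.sum_lt_top.mpr fun k _ => ?_
    rw [Measure.smul_apply, smul_eq_mul]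
    exact ENNReal.mul_lt_top ENNReal.ofReal_lt_top (measure_lt_top _ _)
  have hMtail : ∀ x, tail M x = ∑ k ∈ Finset.range (n + 1), p k * tail (H k) x := by
    intro x; simp only [tail]; exact hMap _
  have hMintv : ∀ x y, intv M x y = ∑ k ∈ Finset.range (n + 1), p k * intv (H k) x y := by
    intro x y; simp only [intv]; exact hMap _
  constructor
  · -- LongTailed M → LongTailed (H n)
    intro hLM
    have hMpos := longTailed_pos hLM
    have hAall : ∀ k, ∃ t c : ℝ, 0 < c ∧
        (k ≤ n → ∀ x, c * tail (H k) x ≤ tail (H n) (x + t)) := by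
      intro k
      by_cases hk : k ≤ n
      · obtain ⟨t, c, h1, h2⟩ := tailA F H hHp hH hFpos k n hk
        exact ⟨t, c, h1, fun _ => h2⟩
      · exact ⟨0, 1, one_pos, fun h => absurd h hk⟩
    choose t c hc hA using hAall
    set s := ∑ k ∈ Finset.range (n + 1), |t k| with hs
    have hst : ∀ k ∈ Finset.range (n + 1), 0 ≤ s + t k := by
      intro k hk
      have h1 : |t k| ≤ s := by
        rw [hs]; exact Finset.single_le_sum (f := fun i => |t i|) (fun i _ => abs_nonneg _) hk
      have h2 := neg_abs_le (t k)
      linarith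
    set C := ∑ k ∈ Finset.range (n + 1), p k / c k with hC
    have hCpos : 0 < C := by
      rw [hC]
      exact lt_of_lt_of_le (div_pos hpn (hc n))
        (Finset.single_le_sum (fun k _ => div_nonneg (hp0 k) (hc k).le)
          (Finset.self_mem_range_succ n))
    have hlow : ∀ x, tail M (x + s) ≤ C * tail (H n) x := by
      intro x
      rw [hMtail, hC, Finset.sum_mul]
      refine Finset.sum_le_sum fun k hk => ?_
      have hkn : k ≤ n := Nat.lt_succ_iff.mp (Finset.mem_range.mp hk)
      have h1 := hA k hkn (x + s)
      have h2 : tail (H n) ((x + s) + t k) ≤ tail (H n) x :=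
        tail_anti _ (by have := hst k hk; linarith)
      have h3 : tail (H k) (x + s) ≤ tail (H n) x / c k := by
        rw [le_div_iff₀ (hc k)]
        calc tail (H k) (x + s) * c k = c k * tail (H k) (x + s) := by ring
          _ ≤ tail (H n) ((x + s) + t k) := h1
          _ ≤ tail (H n) x := h2
      calc p k * tail (H k) (x + s) ≤ p k * (tail (H n) x / c k) :=
            mul_le_mul_of_nonneg_left h3 (hp0 k)
        _ = p k / c k * tail (H n) x := by ring
    have hνpos : ∀ x, 0 < tail (H n) x := by
      intro x
      have h1 := lt_of_lt_of_le (hMpos (x + s)) (hlow x)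
      nlinarith [tail_nonneg (H n) x]
    apply longTailed_of_ratio hνpos
    apply squeeze_zero'
      (g := fun x => (C / p n) * ((tail M x - tail M (x + 1)) / tail M (x + s)))
    · exact Eventually.of_forall fun x =>
        div_nonneg (sub_nonneg.mpr (tail_anti _ (by linarith))) (hνpos x).le
    · refine Eventually.of_forall fun x => ?_
      have hnum : p n * (tail (H n) x - tail (H n) (x + 1)) ≤ tail M x - tail M (x + 1) := by
        rw [← intv_eq (H n) (by linarith : x ≤ x + 1), ← intv_eq M (by linarith : x ≤ x + 1),
          hMintv]
        exact Finset.single_le_sum (fun k _ => mul_nonneg (hp0 k) (intv_nonneg _ _ _))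
          (Finset.self_mem_range_succ n)
      have hd1 : 0 < tail M (x + s) := hMpos _
      calc (tail (H n) x - tail (H n) (x + 1)) / tail (H n) x
          ≤ (tail (H n) x - tail (H n) (x + 1)) / (tail M (x + s) / C) := by
            gcongr
            · exact sub_nonneg.mpr (tail_anti _ (by linarith))
            · rw [div_le_iff₀ hCpos]
              calc tail M (x + s) ≤ C * tail (H n) x := hlow x
                _ = tail (H n) x * C := by ring
        _ ≤ ((tail M x - tail M (x + 1)) / p n) / (tail M (x + s) / C) := by
            refine div_le_div_of_nonneg_right ?_ (div_pos hd1 hCpos).le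
            rw [le_div_iff₀ hpn]
            nlinarith [hnum]
        _ = (C / p n) * ((tail M x - tail M (x + 1)) / tail M (x + s)) := by
            field_simp
    · have h1 := (longTailed_diff hLM (-s) (1 - s)).comp
        (tendsto_atTop_add_const_right atTop s tendsto_id)
      have h2 : Tendsto (fun x => (tail M x - tail M (x + 1)) / tail M (x + s)) atTop
          (nhds 0) := by
        refine h1.congr fun x => ?_
        simp only [Function.comp, id]
        rw [show x + s + -s = x from by ring, show x + s + (1 - s) = x + 1 from by ring]
      have h3 := h2.const_mul (C / p n)
      rw [mul_zero] at h3
      exact h3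
  · -- LongTailed (H n) → LongTailed M
    intro hLn
    have hνpos := longTailed_pos hLn
    have hlowM : ∀ x, p n * tail (H n) x ≤ tail M x := by
      intro x
      rw [hMtail]
      exact Finset.single_le_sum (fun k _ => mul_nonneg (hp0 k) (tail_nonneg _ _))
        (Finset.self_mem_range_succ n)
    have hMpos : ∀ x, 0 < tail M x := fun x =>
      lt_of_lt_of_le (mul_pos hpn (hνpos x)) (hlowM x)
    have hBall : ∀ k, ∃ a b γ : ℝ, a ≤ b ∧ 0 < γ ∧
        (k ≤ n → ∀ x y, γ * intv (H k) x y ≤ intv (H n) (x + a) (y + b)) := by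
      intro k
      by_cases hk : k ≤ n
      · obtain ⟨a, b, γ, h1, h2, h3⟩ := intvB F H hHp hH hFpos k n hk
        exact ⟨a, b, γ, h1, h2, fun _ => h3⟩
      · exact ⟨0, 0, 1, le_rfl, one_pos, fun h => absurd h hk⟩
    choose a b γ hab hγ hB using hBall
    apply longTailed_of_ratio hMpos
    apply squeeze_zero'
      (g := fun x => ∑ k ∈ Finset.range (n + 1),
        (p k / (γ k * p n)) * ((tail (H n) (x + a k) - tail (H n) (x + (1 + b k))) /
          tail (H n) x))
    · exact Eventually.of_forall fun x =>
        div_nonneg (sub_nonneg.mpr (tail_anti _ (by linarith))) (hMpos x).le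
    · refine Eventually.of_forall fun x => ?_
      have hsplit : tail M x - tail M (x + 1) =
          ∑ k ∈ Finset.range (n + 1), p k * intv (H k) x (x + 1) := by
        rw [← intv_eq M (by linarith : x ≤ x + 1), hMintv]
      calc (tail M x - tail M (x + 1)) / tail M x
          ≤ (tail M x - tail M (x + 1)) / (p n * tail (H n) x) := by
            gcongr
            · exact sub_nonneg.mpr (tail_anti _ (by linarith))
            · exact mul_pos hpn (hνpos x)
            · exact hlowM x
        _ ≤ (∑ k ∈ Finset.range (n + 1),
              (p k / γ k) * (tail (H n) (x + a k) - tail (H n) (x + (1 + b k)))) /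
            (p n * tail (H n) x) := by
            refine div_le_div_of_nonneg_right ?_ (mul_pos hpn (hνpos x)).le
            rw [hsplit]
            refine Finset.sum_le_sum fun k hk => ?_
            have hkn : k ≤ n := Nat.lt_succ_iff.mp (Finset.mem_range.mp hk)
            have h1 := hB k hkn x (x + 1)
            calc p k * intv (H k) x (x + 1)
                = (p k / γ k) * (γ k * intv (H k) x (x + 1)) := by
                  rw [div_mul_eq_mul_div, mul_div_assoc, mul_div_cancel_left₀ _ (hγ k).ne']
              _ ≤ (p k / γ k) * intv (H n) (x + a k) ((x + 1) + b k) :=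
                  mul_le_mul_of_nonneg_left h1 (div_nonneg (hp0 k) (hγ k).le)
              _ = (p k / γ k) * (tail (H n) (x + a k) - tail (H n) (x + (1 + b k))) := by
                  rw [intv_eq (H n) (by linarith [hab k] : x + a k ≤ x + 1 + b k),
                    show (x : ℝ) + 1 + b k = x + (1 + b k) from by ring]
        _ = ∑ k ∈ Finset.range (n + 1),
              (p k / (γ k * p n)) * ((tail (H n) (x + a k) - tail (H n) (x + (1 + b k))) /
                tail (H n) x) := by
            rw [Finset.sum_div]
            refine Finset.sum_congr rfl fun k hk => ?_
            rw [div_mul_eq_mul_div, div_div, div_mul_div_comm, mul_assoc]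
    · rw [show (0 : ℝ) = ∑ k ∈ Finset.range (n + 1), (0 : ℝ) from by simp]
      refine tendsto_finset_sum _ fun k _ => ?_
      have h1 := (longTailed_diff hLn (a k) (1 + b k)).const_mul (p k / (γ k * p n))
      rw [mul_zero] at h1
      exact h1
end
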